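/- Let G be a finite connected simple graph in which every cycle has length at most 4, and let v be a vertex of G lying on some cycle such that G − v is connected. Then for all vertices u, w distinct from v, dist_{G−v}(u,w) = dist_G(u,w); consequently W(G − v) = W(G) − t_G(v) < W(G). -/

import Mathlib

open SimpleGraph

/-- The Wiener index: sum of distances over unordered pairs of vertices. -/
noncomputable def wiener {V : Type*} [Fintype V] (G : SimpleGraph V) : ℕ :=
  (∑ u : V, ∑ v : V, G.dist u v) / 2

/-- The transmission of a vertex: sum of distances to all vertices. -/
noncomputable def transmission {V : Type*} [Fintype V] (G : SimpleGraph V) (v : V) : ℕ :=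
  ∑ u : V, G.dist v u

/-- The graph `G - v`: induced subgraph on the vertices distinct from `v`. -/
def delVert {V : Type*} (G : SimpleGraph V) (v : V) : SimpleGraph {u : V // u ≠ v} :=
  SimpleGraph.comap Subtype.val G

/-- A vertex is good if `G - v` is connected and has the same Wiener index as `G`. -/
def good {V : Type*} [Fintype V] [DecidableEq V] (G : SimpleGraph V) (v : V) : Prop :=
  (delVert G v).Connected ∧ wiener (delVert G v) = wiener G

section Aux

/-- The embedding of `G - v` into `G`. -/
def delVertEmb {V : Type*} (G : SimpleGraph V) (v : V) : (delVert G v) ↪g G :=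
  SimpleGraph.Embedding.comap (Function.Embedding.subtype _) G

lemma lift_walk {V : Type*} {G : SimpleGraph V} {v : V} {u w : V} (p : G.Walk u w)
    (hp : v ∉ p.support) (hu : u ≠ v) (hw : w ≠ v) :
    ∃ q : (delVert G v).Walk ⟨u, hu⟩ ⟨w, hw⟩, q.length = p.length := by
  revert hp hu hw
  induction p with
  | nil => exact fun _ _ _ => ⟨SimpleGraph.Walk.nil, rfl⟩
  | @cons a x c h p ih =>
    intro hs hu hw
    rw [SimpleGraph.Walk.support_cons, List.mem_cons] at hs
    push_neg at hs
    have hx : x ≠ v := fun hc => hs.2 (hc ▸ p.start_mem_support)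
    obtain ⟨q, hq⟩ := ih hs.2 hx hw
    exact ⟨SimpleGraph.Walk.cons (by exact h) q, by exact congrArg (· + 1) hq⟩

lemma exists_mid {V : Type*} {G : SimpleGraph V} {v : V}
    (hshort : ∀ (u : V) (w : G.Walk u u), w.IsCycle → w.length ≤ 4)
    (hconn : (delVert G v).Connected) {a b : V} (hva : G.Adj v a) (hvb : G.Adj v b)
    (hab : a ≠ b) (hnadj : ¬ G.Adj a b) :
    ∃ x : {x : V // x ≠ v}, G.Adj a x.1 ∧ G.Adj x.1 b := by
  have ha : a ≠ v := hva.ne.symm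
  have hb : b ≠ v := hvb.ne.symm
  obtain ⟨p, hp, hlen⟩ := hconn.exists_path_of_dist ⟨a, ha⟩ ⟨b, hb⟩
  set P : G.Walk a b := p.map (delVertEmb G v).toHom with hP
  have hPlen : P.length = p.length := by rw [hP]; exact SimpleGraph.Walk.length_map _ _
  have hPpath : P.IsPath := SimpleGraph.Walk.map_isPath_of_injective Subtype.val_injective hp
  have hvP : v ∉ P.support := by
    intro h
    replace h : v ∈ p.support.map (delVertEmb G v).toHom := by
      rw [← SimpleGraph.Walk.support_map]; exact h
    rw [List.mem_map] at h
    obtain ⟨x, -, hx⟩ := h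
    exact x.2 hx
  have hpath2 : (P.concat hvb.symm).IsPath := by
    rw [← SimpleGraph.Walk.isPath_reverse_iff, SimpleGraph.Walk.reverse_concat,
      SimpleGraph.Walk.cons_isPath_iff]
    exact ⟨hPpath.reverse, by simpa [SimpleGraph.Walk.support_reverse] using hvP⟩
  have hedge : s(v, a) ∉ (P.concat hvb.symm).edges := by
    rw [SimpleGraph.Walk.edges_concat]
    intro hmem
    rw [List.concat_eq_append, List.mem_append] at hmem
    rcases hmem with h1 | h2
    · exact hvP (P.fst_mem_support_of_mem_edges h1)
    · rw [List.mem_singleton, Sym2.eq_iff] at h2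
      rcases h2 with ⟨h3, h4⟩ | ⟨h3, h4⟩
      · exact ha h4
      · exact hab h4
  have hcyc : (SimpleGraph.Walk.cons hva (P.concat hvb.symm)).IsCycle :=
    (SimpleGraph.Walk.cons_isCycle_iff _ hva).mpr ⟨hpath2, hedge⟩
  have h4 := hshort v _ hcyc
  rw [SimpleGraph.Walk.length_cons, SimpleGraph.Walk.length_concat, hPlen] at h4
  have h0 : p.length ≠ 0 := fun h =>
    hab (congrArg Subtype.val (SimpleGraph.Walk.eq_of_length_eq_zero h))
  have h1 : p.length ≠ 1 := by
    intro h
    have hadj := p.adj_getVert_succ (i := 0) (by omega)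
    rw [SimpleGraph.Walk.getVert_zero] at hadj
    have hgv : p.getVert 1 = ⟨b, hb⟩ := by rw [← h, SimpleGraph.Walk.getVert_length]
    rw [hgv] at hadj
    exact hnadj hadj
  have h2 : p.length = 2 := by omega
  refine ⟨p.getVert 1, ?_, ?_⟩
  · have hadj := p.adj_getVert_succ (i := 0) (by omega)
    rw [SimpleGraph.Walk.getVert_zero] at hadj
    exact hadj
  · have hadj := p.adj_getVert_succ (i := 1) (by omega)
    have hgv : p.getVert 2 = ⟨b, hb⟩ := by rw [← h2, SimpleGraph.Walk.getVert_length]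
    rw [hgv] at hadj
    exact hadj

lemma dist_del_eq {V : Type*} [DecidableEq V] {G : SimpleGraph V} (hG : G.Connected)
    (hshort : ∀ (u : V) (w : G.Walk u u), w.IsCycle → w.length ≤ 4)
    {v : V} (hconn : (delVert G v).Connected) (u w : {x : V // x ≠ v}) :
    (delVert G v).dist u w = G.dist u w := by
  refine le_antisymm ?_ ?_
  · obtain ⟨p, hp, hlen⟩ := hG.exists_path_of_dist u.1 w.1
    rw [← hlen]
    by_cases hvp : v ∈ p.support
    · -- surgery: replace the visit of v
      have hq1p : (p.takeUntil v hvp).IsPath := hp.takeUntil hvp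
      have hq2p : (p.dropUntil v hvp).IsPath := hp.dropUntil hvp
      have hlensum : (p.takeUntil v hvp).length + (p.dropUntil v hvp).length = p.length := by
        rw [← SimpleGraph.Walk.length_append, SimpleGraph.Walk.take_spec]
      obtain ⟨a, hva, r1, hr1⟩ :=
        SimpleGraph.Walk.exists_eq_cons_of_ne (fun h => u.2 h.symm) (p.takeUntil v hvp).reverse
      obtain ⟨b, hvb, r2, hr2⟩ :=
        SimpleGraph.Walk.exists_eq_cons_of_ne (fun h => w.2 h.symm) (p.dropUntil v hvp)
      have hr1path : (SimpleGraph.Walk.cons hva r1).IsPath := hr1 ▸ hq1p.reverse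
      have hr2path : (SimpleGraph.Walk.cons hvb r2).IsPath := hr2 ▸ hq2p
      rw [SimpleGraph.Walk.cons_isPath_iff] at hr1path hr2path
      have hvr1 : v ∉ r1.support := hr1path.2
      have hvr2 : v ∉ r2.support := hr2path.2
      have hlr1 : r1.length + 1 = (p.takeUntil v hvp).length := by
        have := congrArg SimpleGraph.Walk.length hr1
        rw [SimpleGraph.Walk.length_reverse, SimpleGraph.Walk.length_cons] at this
        omega
      have hlr2 : r2.length + 1 = (p.dropUntil v hvp).length := by
        have := congrArg SimpleGraph.Walk.length hr2
        rw [SimpleGraph.Walk.length_cons] at this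
        omega
      have ha : a ≠ v := hva.ne.symm
      have hb : b ≠ v := hvb.ne.symm
      have key : ∀ (m : G.Walk a b), v ∉ m.support → m.length ≤ 2 →
          (delVert G v).dist u w ≤ p.length := by
        intro m hm hml
        have hWs : v ∉ ((r1.reverse.append m).append r2).support := by
          rw [SimpleGraph.Walk.mem_support_append_iff, SimpleGraph.Walk.mem_support_append_iff]
          push_neg
          exact ⟨⟨by simpa [SimpleGraph.Walk.support_reverse] using hvr1, hm⟩, hvr2⟩
        obtain ⟨q, hq⟩ := lift_walk _ hWs u.2 w.2
        have hd : (delVert G v).dist u w ≤ q.length := (delVert G v).dist_le q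
        rw [hq] at hd
        simp only [SimpleGraph.Walk.length_append, SimpleGraph.Walk.length_reverse] at hd
        omega
      rcases eq_or_ne a b with rfl | hab
      · exact key .nil (by simpa using Ne.symm ha) (by simp)
      · by_cases hadj : G.Adj a b
        · exact key (.cons hadj .nil) (by simpa using ⟨Ne.symm ha, Ne.symm hb⟩) (by simp)
        · obtain ⟨x, hax, hxb⟩ := exists_mid hshort hconn hva hvb hab hadj
          have hxv : v ≠ x.1 := fun h => x.2 h.symm
          exact key (.cons hax (.cons hxb .nil))
            (by simp [Ne.symm ha, Ne.symm hb, hxv]) (by simp)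
    · obtain ⟨q, hq⟩ := lift_walk p hvp u.2 w.2
      have hd : (delVert G v).dist u w ≤ q.length := (delVert G v).dist_le q
      rw [hq] at hd
      exact hd
  · obtain ⟨p, hp, hlen⟩ := hconn.exists_path_of_dist u w
    have hd := G.dist_le (p.map (delVertEmb G v).toHom)
    rwa [SimpleGraph.Walk.length_map, hlen] at hd

lemma even_double_sum {α : Type*} [DecidableEq α] (f : α → α → ℕ) (hs : ∀ u w, f u w = f w u)
    (hd : ∀ u, f u u = 0) (s : Finset α) : Even (∑ u ∈ s, ∑ w ∈ s, f u w) := by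
  induction s using Finset.induction_on with
  | empty => simp
  | @insert a s ha ih =>
    rw [Finset.sum_insert ha]
    have h1 : ∑ w ∈ insert a s, f a w = ∑ w ∈ s, f a w := by
      rw [Finset.sum_insert ha, hd, zero_add]
    have h2 : ∀ u ∈ s, ∑ w ∈ insert a s, f u w = f u a + ∑ w ∈ s, f u w := fun u _ => by
      rw [Finset.sum_insert ha]
    rw [h1, Finset.sum_congr rfl h2, Finset.sum_add_distrib]
    have h3 : ∑ u ∈ s, f u a = ∑ u ∈ s, f a u := Finset.sum_congr rfl fun x _ => hs x a
    rw [h3]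
    obtain ⟨k, hk⟩ := ih
    exact ⟨(∑ w ∈ s, f a w) + k, by omega⟩

lemma sum_split {V : Type*} [Fintype V] [DecidableEq V] (f : V → ℕ) (v : V) :
    ∑ u : V, f u = f v + ∑ u : {x : V // x ≠ v}, f u.1 := by
  have h1 : ∑ u : {x : V // x ≠ v}, f u.1 = ∑ u ∈ Finset.univ.erase v, f u :=
    (Finset.sum_subtype _ (by simp) f).symm
  rw [h1, Finset.add_sum_erase _ f (Finset.mem_univ v)]

end Aux

/-- If every cycle of a connected graph has length at most 4 and `v` lies on a cycle with
`G - v` connected, then distances between remaining vertices are unchanged, whence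
`W(G - v) = W(G) - t_G(v) < W(G)`. -/
theorem dist_eq_and_wiener_lt_of_cycles_le_four {V : Type*} [Fintype V] [DecidableEq V]
    (G : SimpleGraph V) (hG : G.Connected)
    (hshort : ∀ (u : V) (w : G.Walk u u), w.IsCycle → w.length ≤ 4)
    (v : V) (hv : ∃ (u : V) (w : G.Walk u u), w.IsCycle ∧ v ∈ w.support)
    (hconn : (delVert G v).Connected) :
    (∀ u w : {x : V // x ≠ v}, (delVert G v).dist u w = G.dist u w) ∧
    wiener (delVert G v) = wiener G - transmission G v ∧
    wiener (delVert G v) < wiener G := by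
  have hdist : ∀ u w : {x : V // x ≠ v}, (delVert G v).dist u w = G.dist u w :=
    fun u w => dist_del_eq hG hshort hconn u w
  set t := transmission G v with ht
  -- the sum of distances in G - v
  set Ssub := ∑ u : {x : V // x ≠ v}, ∑ w : {x : V // x ≠ v}, G.dist u.1 w.1 with hSsub
  have hwdel : wiener (delVert G v) = Ssub / 2 := by
    unfold wiener
    congr 1
    exact Finset.sum_congr rfl fun u _ => Finset.sum_congr rfl fun w _ => hdist u w
  -- splitting the total sum
  have htv : ∑ u : {x : V // x ≠ v}, G.dist v u.1 = t := by
    have := sum_split (fun u => G.dist v u) v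
    rw [SimpleGraph.dist_self] at this
    rw [ht]
    unfold transmission
    omega
  have htv' : ∑ u : {x : V // x ≠ v}, G.dist u.1 v = t := by
    rw [← htv]
    exact Finset.sum_congr rfl fun u _ => SimpleGraph.dist_comm
  have hsplit : ∑ u : V, ∑ w : V, G.dist u w = t + t + Ssub := by
    rw [sum_split (fun u => ∑ w : V, G.dist u w) v]
    have hinner : ∀ u : {x : V // x ≠ v}, (∑ w : V, G.dist u.1 w) =
        G.dist u.1 v + ∑ w : {x : V // x ≠ v}, G.dist u.1 w.1 :=
      fun u => sum_split (fun w => G.dist u.1 w) v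
    rw [Finset.sum_congr rfl fun u _ => hinner u, Finset.sum_add_distrib, htv', hSsub]
    have : (∑ w : V, G.dist v w) = t := by rw [ht]; rfl
    omega
  have heven : Even Ssub :=
    even_double_sum (fun a b : {x : V // x ≠ v} => G.dist a.1 b.1)
      (fun a b => SimpleGraph.dist_comm) (fun a => SimpleGraph.dist_self) _
  obtain ⟨k, hk⟩ := heven
  have hwG : wiener G = t + k := by
    unfold wiener
    omega
  have hwdel' : wiener (delVert G v) = k := by omega
  -- transmission is positive
  have htpos : 0 < t := by
    obtain ⟨u₀⟩ := hconn.nonempty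
    have hpos : 0 < G.dist v u₀.1 := hG.pos_dist_of_ne (Ne.symm u₀.2)
    have hle : G.dist v u₀.1 ≤ t := by
      rw [ht]
      exact Finset.single_le_sum (f := fun u => G.dist v u)
        (fun i _ => Nat.zero_le _) (Finset.mem_univ u₀.1)
    omega
  exact ⟨hdist, by omega, by omega⟩
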